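/- Let events {A0 = a} and {k ∼ ρ} be independent on a finite (or countable, with geometric time distribution) probability space, where ρ(k) = β^{k−1}(1−β) for k ≥ 1 and β ∈ (0,1). Define h_β(a|x,y) := P(A0 = a | X_K = y), where K ∼ ρ is drawn independently of the trajectory. Then for any x, a with π(a|x) > 0 and β = γ: Q^π(x,a) = r(x,a) + E_{τ∼T(x,π)}[ Σ_{k≥1} γ^k (h_β(a|x,X_k)/π(a|x)) r^π(X_k) ]. -/

import Mathlib

open Finset

set_option maxHeartbeats 800000 in
/-- Time-independent state-conditional HCA (Appendix Theorem 6 / Statement 7).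
In a finite MDP with discount `γ ∈ (0,1)` and `β = γ`, let
`ρ k = β^(k−1)(1−β)` for `k ≥ 1` be the geometric time distribution, drawn
independently of the trajectory (so `P(X_K = y | A₀ = a, K∼ρ) = Σ_k ρ k ·
P(X_k = y | A₀ = a)`), and let
`hβ y = P(A₀ = a | X_K = y, K∼ρ)` be given by Bayes' rule.
Then for `π(a|x) = πa > 0`:
`Q^π(x,a) = r(x,a) + E_{τ∼T(x,π)}[Σ_{k≥1} γ^k (hβ(a|x,X_k)/π(a|x)) r^π(X_k)]`. -/
theorem stmt_7 {X : Type*} [Fintype X]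
    (γ : ℝ) (hγ0 : 0 < γ) (hγ1 : γ < 1)
    (πa : ℝ) (hπpos : 0 < πa) (hπle : πa ≤ 1)
    (rxa : ℝ) (rπ : X → ℝ)
    (Pk PkA : ℕ → X → ℝ)
    (hPk_nonneg : ∀ k y, 0 ≤ Pk k y) (hPkA_nonneg : ∀ k y, 0 ≤ PkA k y)
    (hPk_sum : ∀ k, ∑ y, Pk k y = 1) (hPkA_sum : ∀ k, ∑ y, PkA k y = 1)
    (hdom : ∀ k y, Pk k y = 0 → PkA k y = 0)
    (ρ : ℕ → ℝ) (hρ0 : ρ 0 = 0)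
    (hρ : ∀ k, 1 ≤ k → ρ k = γ ^ (k - 1) * (1 - γ))
    (hβ : X → ℝ)
    (hβdef : ∀ y, 0 < ∑' k : ℕ, ρ k * Pk k y →
      hβ y = πa * (∑' k : ℕ, ρ k * PkA k y) / (∑' k : ℕ, ρ k * Pk k y)) :
    rxa + ∑' k : ℕ, γ ^ (k + 1) * ∑ y, PkA (k + 1) y * rπ y
      = rxa + ∑' k : ℕ, γ ^ (k + 1) * ∑ y, Pk (k + 1) y * (hβ y / πa) * rπ y := by
  congr 1
  have h1γ : (0:ℝ) < 1 - γ := by linarith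
  have hgeo : Summable (fun k : ℕ => γ ^ k) := summable_geometric_of_lt_one hγ0.le hγ1
  have hPk_le1 : ∀ k y, Pk k y ≤ 1 := fun k y => by
    calc Pk k y ≤ ∑ y', Pk k y' :=
          Finset.single_le_sum (fun y' _ => hPk_nonneg k y') (Finset.mem_univ y)
      _ = 1 := hPk_sum k
  have hPkA_le1 : ∀ k y, PkA k y ≤ 1 := fun k y => by
    calc PkA k y ≤ ∑ y', PkA k y' :=
          Finset.single_le_sum (fun y' _ => hPkA_nonneg k y') (Finset.mem_univ y)
      _ = 1 := hPkA_sum k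
  -- ρ bounds
  have hρ_nonneg : ∀ k, 0 ≤ ρ k := by
    intro k
    rcases Nat.eq_zero_or_pos k with h | h
    · simp [h, hρ0]
    · rw [hρ k h]
      positivity
  have hρ_pos : ∀ k, 1 ≤ k → 0 < ρ k := by
    intro k hk
    rw [hρ k hk]; positivity
  -- generic summability for Q ∈ {Pk, PkA}
  have key_summ : ∀ (Q : ℕ → X → ℝ), (∀ k y, 0 ≤ Q k y) → (∀ k y, Q k y ≤ 1) →
      ∀ y, Summable (fun k => γ ^ (k + 1) * Q (k + 1) y) := by
    intro Q hQ0 hQ1 y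
    apply Summable.of_nonneg_of_le
      (fun k => mul_nonneg (by positivity) (hQ0 _ _)) (fun k => ?_) (hgeo.mul_left γ)
    calc γ ^ (k+1) * Q (k+1) y ≤ γ ^ (k+1) * 1 := by
          apply mul_le_mul_of_nonneg_left (hQ1 _ _) (by positivity)
      _ = γ * γ ^ k := by ring
  have hsummPk := key_summ Pk hPk_nonneg hPk_le1
  have hsummPkA := key_summ PkA hPkA_nonneg hPkA_le1
  have hsummρ : ∀ (Q : ℕ → X → ℝ), (∀ k y, 0 ≤ Q k y) → (∀ k y, Q k y ≤ 1) →
      ∀ y, Summable (fun k => ρ k * Q k y) := by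
    intro Q hQ0 hQ1 y
    apply Summable.of_nonneg_of_le (fun k => mul_nonneg (hρ_nonneg k) (hQ0 k y))
      (fun k => ?_) (hgeo.mul_left (1/γ))
    rcases Nat.eq_zero_or_pos k with h | h
    · simp [h, hρ0]; positivity
    · rw [hρ k h]
      have h1 : γ ^ (k - 1) * (1 - γ) * Q k y ≤ γ ^ (k-1) := by
        nlinarith [pow_nonneg hγ0.le (k-1), hQ0 k y, hQ1 k y,
          mul_nonneg (pow_nonneg hγ0.le (k-1)) (hQ0 k y)]
      have h2 : γ ^ (k - 1) = (1/γ) * γ ^ k := by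
        have hk : k - 1 + 1 = k := by omega
        field_simp
        rw [← pow_succ, hk]
      linarith [h1, h2.le]
  -- relation between ρ-sums and γ-sums
  have hshift : ∀ (Q : ℕ → X → ℝ), (∀ k y, 0 ≤ Q k y) → (∀ k y, Q k y ≤ 1) → ∀ y,
      γ * (∑' k, ρ k * Q k y) = (1 - γ) * ∑' k, γ ^ (k+1) * Q (k+1) y := by
    intro Q hQ0 hQ1 y
    rw [Summable.tsum_eq_zero_add (hsummρ Q hQ0 hQ1 y)]
    rw [hρ0, zero_mul, zero_add]
    rw [← tsum_mul_left, ← tsum_mul_left]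
    apply tsum_congr
    intro k
    rw [hρ (k+1) (by omega)]
    simp only [Nat.add_sub_cancel]
    ring
  -- the per-state identity
  have key : ∀ y, (∑' k, γ ^ (k+1) * PkA (k+1) y)
      = (∑' k, γ ^ (k+1) * (Pk (k+1) y * (hβ y / πa))) := by
    intro y
    have hS := hshift Pk hPk_nonneg hPk_le1 y
    have hSA := hshift PkA hPkA_nonneg hPkA_le1 y
    have hS0 : 0 ≤ ∑' k, ρ k * Pk k y :=
      tsum_nonneg (fun k => mul_nonneg (hρ_nonneg k) (hPk_nonneg k y))
    have hrw : (fun k => γ ^ (k+1) * (Pk (k+1) y * (hβ y / πa)))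
        = fun k => (γ ^ (k+1) * Pk (k+1) y) * (hβ y / πa) := by
      funext k; ring
    rw [hrw, tsum_mul_right]
    rcases eq_or_lt_of_le hS0 with hS0' | hSpos
    · have hzero : ∀ k, Pk (k+1) y = 0 := by
        intro k
        have hle : ρ (k+1) * Pk (k+1) y ≤ ∑' k, ρ k * Pk k y :=
          Summable.le_tsum (hsummρ Pk hPk_nonneg hPk_le1 y) (k+1)
            (fun j _ => mul_nonneg (hρ_nonneg j) (hPk_nonneg j y))
        have hge : 0 ≤ ρ (k+1) * Pk (k+1) y :=
          mul_nonneg (hρ_nonneg _) (hPk_nonneg _ _)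
        have : ρ (k+1) * Pk (k+1) y = 0 :=
          le_antisymm (hle.trans (le_of_eq hS0'.symm)) hge
        rcases mul_eq_zero.mp this with h | h
        · exact absurd h (ne_of_gt (hρ_pos (k+1) (by omega)))
        · exact h
      have hzeroA : ∀ k, PkA (k+1) y = 0 := fun k => hdom _ _ (hzero k)
      simp [hzero, hzeroA]
    · have hβval := hβdef y hSpos
      have hβq : hβ y / πa = (∑' k, ρ k * PkA k y) / (∑' k, ρ k * Pk k y) := by
        rw [hβval]
        field_simp
      rw [hβq]
      have hUS : (∑' k, γ ^ (k+1) * Pk (k+1) y) = γ * (∑' k, ρ k * Pk k y) / (1 - γ) := by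
        field_simp
        linarith [hS]
      have hTSA : (∑' k, γ ^ (k+1) * PkA (k+1) y) = γ * (∑' k, ρ k * PkA k y) / (1 - γ) := by
        field_simp
        linarith [hSA]
      rw [hUS, hTSA]
      field_simp
  calc ∑' k : ℕ, γ ^ (k + 1) * ∑ y, PkA (k + 1) y * rπ y
      = ∑' k : ℕ, ∑ y, (γ ^ (k+1) * PkA (k + 1) y) * rπ y := by
        apply tsum_congr; intro k; rw [Finset.mul_sum]; apply Finset.sum_congr rfl; intro y _; ring
    _ = ∑ y, ∑' k : ℕ, (γ ^ (k+1) * PkA (k + 1) y) * rπ y := by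
        apply Summable.tsum_finsetSum; intro y _; exact (hsummPkA y).mul_right _
    _ = ∑ y, (∑' k : ℕ, γ ^ (k+1) * PkA (k + 1) y) * rπ y := by
        apply Finset.sum_congr rfl; intro y _; exact tsum_mul_right
    _ = ∑ y, (∑' k : ℕ, γ ^ (k+1) * (Pk (k + 1) y * (hβ y / πa))) * rπ y := by
        apply Finset.sum_congr rfl; intro y _; rw [key y]
    _ = ∑ y, ∑' k : ℕ, (γ ^ (k+1) * (Pk (k + 1) y * (hβ y / πa))) * rπ y := by
        apply Finset.sum_congr rfl; intro y _; exact tsum_mul_right.symm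
    _ = ∑' k : ℕ, ∑ y, (γ ^ (k+1) * (Pk (k + 1) y * (hβ y / πa))) * rπ y := by
        symm; apply Summable.tsum_finsetSum; intro y _;
        exact ((hsummPk y).mul_right ((hβ y / πa) * rπ y)).congr (fun k => by ring)
    _ = ∑' k : ℕ, γ ^ (k + 1) * ∑ y, Pk (k + 1) y * (hβ y / πa) * rπ y := by
        apply tsum_congr; intro k; rw [Finset.mul_sum]; apply Finset.sum_congr rfl; intro y _; ring
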